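/- Tree Progress: in the tree-recognition system, if G is an input tree and G ⇒*_𝓡 H, then either |V_H| = 1 or H is not in normal form (i.e., some rule of 𝓡 is applicable to H via a match satisfying the dangling condition). -/

import Mathlib

/-! # Rooted graph transformation with relabelling -/

/-- A graph over a label alphabet `(LV, LE)`: finite vertex and edge sets, total
source/target functions, a partial node-labelling function `l`, a total
edge-labelling function `m`, and a partial rootedness function `p`
(`some true` = root node, `some false` = non-root, `none` = undefined). -/
structure RGraph (LV LE : Type) : Type 1 where
  V : Type
  E : Type
  finV : Finite V
  finE : Finite E
  s : E → V
  t : E → V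
  l : V → Option LV
  m : E → LE
  p : V → Option Bool

namespace RGraph

variable {LV LE : Type}

def IsTotallyLabelled (G : RGraph LV LE) : Prop := ∀ v, (G.l v).isSome
def IsTotallyRooted (G : RGraph LV LE) : Prop := ∀ v, (G.p v).isSome
/-- totally labelled, totally rooted graph -/
def IsTLRG (G : RGraph LV LE) : Prop := G.IsTotallyLabelled ∧ G.IsTotallyRooted

/-- The number of root nodes `|p⁻¹({1})|`. -/
noncomputable def rootCount (G : RGraph LV LE) : ℕ := Nat.card {v : G.V // G.p v = some true}

/-- The degree of a node. -/
noncomputable def degree (G : RGraph LV LE) (v : G.V) : ℕ :=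
  Nat.card {e : G.E // G.s e = v} + Nat.card {e : G.E // G.t e = v}

end RGraph

/-- RGraph morphisms preserve sources, targets, edge labels, and node labels and
rootedness wherever these are defined. -/
structure Morphism {LV LE : Type} (G H : RGraph LV LE) : Type where
  fV : G.V → H.V
  fE : G.E → H.E
  src : ∀ e, fV (G.s e) = H.s (fE e)
  tgt : ∀ e, fV (G.t e) = H.t (fE e)
  edgeLabel : ∀ e, G.m e = H.m (fE e)
  nodeLabel : ∀ v x, G.l v = some x → H.l (fV v) = some x
  rootedness : ∀ v b, G.p v = some b → H.p (fV v) = some b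

namespace Morphism

variable {LV LE : Type} {G H K : RGraph LV LE}

def Injective (g : Morphism G H) : Prop := Function.Injective g.fV ∧ Function.Injective g.fE

/-- identity morphism -/
def ident (G : RGraph LV LE) : Morphism G G where
  fV := id
  fE := id
  src := fun _ => rfl
  tgt := fun _ => rfl
  edgeLabel := fun _ => rfl
  nodeLabel := fun _ _ h => h
  rootedness := fun _ _ h => h

/-- composition of morphisms -/
def comp (g : Morphism G H) (h : Morphism H K) : Morphism G K where
  fV := h.fV ∘ g.fV
  fE := h.fE ∘ g.fE
  src := fun e => by simp [Function.comp, g.src e, h.src (g.fE e)]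
  tgt := fun e => by simp [Function.comp, g.tgt e, h.tgt (g.fE e)]
  edgeLabel := fun e => by simp [Function.comp, ← h.edgeLabel (g.fE e), g.edgeLabel e]
  nodeLabel := fun v x hx => h.nodeLabel _ _ (g.nodeLabel v x hx)
  rootedness := fun v b hb => h.rootedness _ _ (g.rootedness v b hb)

end Morphism

/-- An isomorphism of graphs: a morphism with a two-sided inverse morphism. -/
structure Iso {LV LE : Type} (G H : RGraph LV LE) : Type where
  toMor : Morphism G H
  invMor : Morphism H G
  leftV : ∀ v, invMor.fV (toMor.fV v) = v
  leftE : ∀ e, invMor.fE (toMor.fE e) = e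
  rightV : ∀ v, toMor.fV (invMor.fV v) = v
  rightE : ∀ e, toMor.fE (invMor.fE e) = e

/-- A rule `⟨L ← K → R⟩`: graphs `L`, `K`, `R` together with inclusion
(injective) morphisms `K ↪ L` and `K ↪ R`.  (In the rooted relabelling setting
`L` and `R` are additionally required to be TLRGs; this requirement is stated
as a hypothesis where needed.) -/
structure Rule (LV LE : Type) : Type 1 where
  L : RGraph LV LE
  K : RGraph LV LE
  R : RGraph LV LE
  incL : Morphism K L
  incR : Morphism K R
  injL : incL.Injective
  injR : incR.Injective

namespace Rule

variable {LV LE : Type} (r : Rule LV LE) (G : RGraph LV LE)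

/-- The inverse rule `r⁻¹ = ⟨R ← K → L⟩`. -/
def inv (r : Rule LV LE) : Rule LV LE where
  L := r.R
  K := r.K
  R := r.L
  incL := r.incR
  incR := r.incL
  injL := r.injR
  injR := r.injL

/-- The dangling condition: no edge of `G ∖ g(L)` is incident to a node of `g(L ∖ K)`. -/
def Dangling (g : Morphism r.L G) : Prop :=
  ∀ e : G.E, (∀ e' : r.L.E, g.fE e' ≠ e) →
    ∀ v : r.L.V, (∀ k : r.K.V, r.incL.fV k ≠ v) →
      G.s e ≠ g.fV v ∧ G.t e ≠ g.fV v

/-- The match `g` is applicable: it is injective and satisfies the dangling condition. -/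
def Applicable (g : Morphism r.L G) : Prop := g.Injective ∧ r.Dangling G g

/-- the nodes `g(L ∖ K)` deleted by applying `r` via `g` -/
def DelV (g : Morphism r.L G) : Set G.V :=
  {x | ∃ v : r.L.V, (∀ k : r.K.V, r.incL.fV k ≠ v) ∧ g.fV v = x}

/-- the edges `g(L ∖ K)` deleted by applying `r` via `g` -/
def DelE (g : Morphism r.L G) : Set G.E :=
  {x | ∃ e : r.L.E, (∀ k : r.K.E, r.incL.fE k ≠ e) ∧ g.fE e = x}

theorem kept_incL {g : Morphism r.L G} (hinj : g.Injective) (k : r.K.V) :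
    g.fV (r.incL.fV k) ∉ r.DelV G g := by
  rintro ⟨v, hv, heq⟩
  exact hv k (hinj.1 heq).symm

theorem kept_src {g : Morphism r.L G} (h : r.Applicable G g) {e : G.E}
    (he : e ∉ r.DelE G g) : G.s e ∉ r.DelV G g := by
  rintro ⟨v, hv, heq⟩
  by_cases hc : ∃ e', g.fE e' = e
  · obtain ⟨e', rfl⟩ := hc
    by_cases hk : ∃ k, r.incL.fE k = e'
    · obtain ⟨k, rfl⟩ := hk
      have h1 : g.fV (r.L.s (r.incL.fE k)) = G.s (g.fE (r.incL.fE k)) := g.src _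
      have h2 : r.incL.fV (r.K.s k) = r.L.s (r.incL.fE k) := r.incL.src k
      have h3 : g.fV v = g.fV (r.incL.fV (r.K.s k)) := by rw [heq, h2, h1]
      exact hv _ (h.1.1 h3).symm
    · exact he ⟨e', fun k hk' => hk ⟨k, hk'⟩, rfl⟩
  · exact (h.2 e (fun e' he' => hc ⟨e', he'⟩) v hv).1 heq.symm

theorem kept_tgt {g : Morphism r.L G} (h : r.Applicable G g) {e : G.E}
    (he : e ∉ r.DelE G g) : G.t e ∉ r.DelV G g := by
  rintro ⟨v, hv, heq⟩
  by_cases hc : ∃ e', g.fE e' = e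
  · obtain ⟨e', rfl⟩ := hc
    by_cases hk : ∃ k, r.incL.fE k = e'
    · obtain ⟨k, rfl⟩ := hk
      have h1 : g.fV (r.L.t (r.incL.fE k)) = G.t (g.fE (r.incL.fE k)) := g.tgt _
      have h2 : r.incL.fV (r.K.t k) = r.L.t (r.incL.fE k) := r.incL.tgt k
      have h3 : g.fV v = g.fV (r.incL.fV (r.K.t k)) := by rw [heq, h2, h1]
      exact hv _ (h.1.1 h3).symm
    · exact he ⟨e', fun k hk' => hk ⟨k, hk'⟩, rfl⟩
  · exact (h.2 e (fun e' he' => hc ⟨e', he'⟩) v hv).2 heq.symm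

attribute [local instance] Classical.propDecidable

/-- The result graph of applying `r` to `G` via an applicable match `g`:
delete `g(L ∖ K)` (undefining labels/rootedness of images of interface nodes
where they are undefined in `K`), then add `R ∖ K` disjointly, relabelling
(and re-rooting) the images of interface nodes according to `R`. -/
noncomputable def result (g : Morphism r.L G) (h : r.Applicable G g) : RGraph LV LE where
  V := {x : G.V // x ∉ r.DelV G g} ⊕ {v : r.R.V // ∀ k, r.incR.fV k ≠ v}
  E := {x : G.E // x ∉ r.DelE G g} ⊕ {e : r.R.E // ∀ k, r.incR.fE k ≠ e}
  finV := by
    haveI := G.finV; haveI := r.R.finV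
    infer_instance
  finE := by
    haveI := G.finE; haveI := r.R.finE
    infer_instance
  s := fun e =>
    match e with
    | Sum.inl x => Sum.inl ⟨G.s x.1, r.kept_src G h x.2⟩
    | Sum.inr x =>
        if hk : ∃ k, r.incR.fV k = r.R.s x.1 then
          Sum.inl ⟨g.fV (r.incL.fV hk.choose), r.kept_incL G h.1 _⟩
        else Sum.inr ⟨r.R.s x.1, fun k hk' => hk ⟨k, hk'⟩⟩
  t := fun e =>
    match e with
    | Sum.inl x => Sum.inl ⟨G.t x.1, r.kept_tgt G h x.2⟩
    | Sum.inr x =>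
        if hk : ∃ k, r.incR.fV k = r.R.t x.1 then
          Sum.inl ⟨g.fV (r.incL.fV hk.choose), r.kept_incL G h.1 _⟩
        else Sum.inr ⟨r.R.t x.1, fun k hk' => hk ⟨k, hk'⟩⟩
  l := fun v =>
    match v with
    | Sum.inl x =>
        if hk : ∃ k : r.K.V, r.K.l k = none ∧ g.fV (r.incL.fV k) = x.1 then
          r.R.l (r.incR.fV hk.choose)
        else G.l x.1
    | Sum.inr v => r.R.l v.1
  m := fun e =>
    match e with
    | Sum.inl x => G.m x.1
    | Sum.inr x => r.R.m x.1
  p := fun v =>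
    match v with
    | Sum.inl x =>
        if hk : ∃ k : r.K.V, r.K.p k = none ∧ g.fV (r.incL.fV k) = x.1 then
          r.R.p (r.incR.fV hk.choose)
        else G.p x.1
    | Sum.inr v => r.R.p v.1

/-- Direct derivation `G ⇒_r M`: there is an applicable match `g` such that `M`
is isomorphic to the result of applying `r` to `G` via `g`. -/
def Deriv (r : Rule LV LE) (G M : RGraph LV LE) : Prop :=
  ∃ (g : Morphism r.L G) (h : r.Applicable G g), Nonempty (Iso (r.result G g h) M)

end Rule

/-- `G ⇒_𝓡 H` for a set of rules. -/
def GTStep {LV LE : Type} (Rs : Set (Rule LV LE)) (G H : RGraph LV LE) : Prop :=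
  ∃ r ∈ Rs, r.Deriv G H

/-- `G ⇒*_𝓡 H`: the reflexive-transitive closure of `⇒_𝓡`, up to isomorphism. -/
def GTDerivStar {LV LE : Type} (Rs : Set (Rule LV LE)) (G H : RGraph LV LE) : Prop :=
  Relation.ReflTransGen (GTStep Rs) G H ∨ Nonempty (Iso G H)
/-! ## The tree-recognition system -/

/-- node labels: `□` (square) and `△` (triangle) -/
inductive NodeLab : Type where
  | square : NodeLab
  | tri : NodeLab
deriving DecidableEq

/-- `L` of rule `r0`: `v1 --□--> v2`, both `□`-labelled, `v1` unrooted, `v2` rooted. -/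
abbrev L0 : RGraph NodeLab Unit where
  V := Fin 2
  E := Unit
  finV := inferInstance
  finE := inferInstance
  s := fun _ => 0
  t := fun _ => 1
  l := fun _ => some .square
  m := fun _ => ()
  p := ![some false, some true]

/-- `K` of rules `r0` and `r1`: the single node `v1`, unlabelled, rootedness undefined. -/
abbrev K0 : RGraph NodeLab Unit where
  V := Unit
  E := PEmpty
  finV := inferInstance
  finE := inferInstance
  s := PEmpty.elim
  t := PEmpty.elim
  l := fun _ => none
  m := PEmpty.elim
  p := fun _ => none

/-- `R` of rules `r0` and `r1`: the single node `v1`, labelled `□`, rooted. -/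
abbrev R0 : RGraph NodeLab Unit where
  V := Unit
  E := PEmpty
  finV := inferInstance
  finE := inferInstance
  s := PEmpty.elim
  t := PEmpty.elim
  l := fun _ => some .square
  m := PEmpty.elim
  p := fun _ => some true

def incL0 : Morphism K0 L0 where
  fV := fun _ => 0
  fE := PEmpty.elim
  src := fun e => e.elim
  tgt := fun e => e.elim
  edgeLabel := fun e => e.elim
  nodeLabel := fun _ _ h => nomatch h
  rootedness := fun _ _ h => nomatch h

def incR0 : Morphism K0 R0 where
  fV := id
  fE := PEmpty.elim
  src := fun e => e.elim
  tgt := fun e => e.elim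
  edgeLabel := fun e => e.elim
  nodeLabel := fun _ _ h => nomatch h
  rootedness := fun _ _ h => nomatch h

/-- rule `r0`: prune a rooted `□`-leaf with unrooted `□`-parent, root moves to the parent -/
def r0 : Rule NodeLab Unit where
  L := L0
  K := K0
  R := R0
  incL := incL0
  incR := incR0
  injL := ⟨Function.injective_of_subsingleton _, Function.injective_of_subsingleton _⟩
  injR := ⟨Function.injective_of_subsingleton _, Function.injective_of_subsingleton _⟩

/-- `L` of rule `r1`: like `L0` but `v1` is labelled `△`. -/
abbrev L1 : RGraph NodeLab Unit where
  V := Fin 2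
  E := Unit
  finV := inferInstance
  finE := inferInstance
  s := fun _ => 0
  t := fun _ => 1
  l := ![some .tri, some .square]
  m := fun _ => ()
  p := ![some false, some true]

def incL1 : Morphism K0 L1 where
  fV := fun _ => 0
  fE := PEmpty.elim
  src := fun e => e.elim
  tgt := fun e => e.elim
  edgeLabel := fun e => e.elim
  nodeLabel := fun _ _ h => nomatch h
  rootedness := fun _ _ h => nomatch h

/-- rule `r1`: prune a rooted `□`-leaf with unrooted `△`-parent, root moves to the
parent which becomes `□`-labelled -/
def r1 : Rule NodeLab Unit where
  L := L1
  K := K0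
  R := R0
  incL := incL1
  incR := incR0
  injL := ⟨Function.injective_of_subsingleton _, Function.injective_of_subsingleton _⟩
  injR := ⟨Function.injective_of_subsingleton _, Function.injective_of_subsingleton _⟩

/-- `L` of rule `r2`: `v1 --□--> v2`, both `□`-labelled, `v1` rooted, `v2` unrooted. -/
abbrev L2 : RGraph NodeLab Unit where
  V := Fin 2
  E := Unit
  finV := inferInstance
  finE := inferInstance
  s := fun _ => 0
  t := fun _ => 1
  l := fun _ => some .square
  m := fun _ => ()
  p := ![some true, some false]

/-- `K` of rule `r2`: nodes `v1, v2`, unlabelled, rootedness undefined, no edges. -/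
abbrev K2 : RGraph NodeLab Unit where
  V := Fin 2
  E := PEmpty
  finV := inferInstance
  finE := inferInstance
  s := PEmpty.elim
  t := PEmpty.elim
  l := fun _ => none
  m := PEmpty.elim
  p := fun _ => none

/-- `R` of rule `r2`: `v1 --□--> v2`, `v1` labelled `△` and unrooted, `v2` labelled `□`
and rooted. -/
abbrev R2 : RGraph NodeLab Unit where
  V := Fin 2
  E := Unit
  finV := inferInstance
  finE := inferInstance
  s := fun _ => 0
  t := fun _ => 1
  l := ![some .tri, some .square]
  m := fun _ => ()
  p := ![some false, some true]

def incL2 : Morphism K2 L2 where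
  fV := id
  fE := PEmpty.elim
  src := fun e => e.elim
  tgt := fun e => e.elim
  edgeLabel := fun e => e.elim
  nodeLabel := fun _ _ h => nomatch h
  rootedness := fun _ _ h => nomatch h

def incR2 : Morphism K2 R2 where
  fV := id
  fE := PEmpty.elim
  src := fun e => e.elim
  tgt := fun e => e.elim
  edgeLabel := fun e => e.elim
  nodeLabel := fun _ _ h => nomatch h
  rootedness := fun _ _ h => nomatch h

/-- rule `r2`: push the root one step down an edge, marking the old position `△` -/
def r2 : Rule NodeLab Unit where
  L := L2
  K := K2
  R := R2
  incL := incL2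
  incR := incR2
  injL := ⟨Function.injective_id, Function.injective_of_subsingleton _⟩
  injR := ⟨Function.injective_id, Function.injective_of_subsingleton _⟩

/-- the rule set of the tree-recognition system -/
def TreeRules : Set (Rule NodeLab Unit) := {r0, r1, r2}

/-! ## Trees -/

/-- `IsUndirWalk G v l w`: `l` is an undirected walk from `v` to `w` in `G`;
each step is an edge together with a boolean telling in which direction it is
traversed. -/
def IsUndirWalk {LV LE : Type} (G : RGraph LV LE) : G.V → List (G.E × Bool) → G.V → Prop
  | v, [], w => v = w
  | v, (e, true) :: rest, w => G.s e = v ∧ IsUndirWalk G (G.t e) rest w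
  | v, (e, false) :: rest, w => G.t e = v ∧ IsUndirWalk G (G.s e) rest w

/-- connectedness via undirected walks -/
def IsConnectedGraph {LV LE : Type} (G : RGraph LV LE) : Prop :=
  ∀ v w : G.V, ∃ l, IsUndirWalk G v l w

/-- an undirected cycle: a non-empty closed undirected walk without repeated edges -/
def HasUndirCycle {LV LE : Type} (G : RGraph LV LE) : Prop :=
  ∃ (v : G.V) (l : List (G.E × Bool)), l ≠ [] ∧ IsUndirWalk G v l v ∧ (l.map Prod.fst).Nodup

/-- a tree: non-empty, connected, no undirected cycles, and every node has at
most one incoming edge -/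
def IsTree {LV LE : Type} (G : RGraph LV LE) : Prop :=
  Nonempty G.V ∧ IsConnectedGraph G ∧ ¬ HasUndirCycle G ∧
    ∀ v : G.V, Nat.card {e : G.E // G.t e = v} ≤ 1

/-- an input graph: a TLRG with exactly one root node, all nodes labelled `□`
(all edges are `□`-labelled since `Unit` is the edge alphabet) -/
def IsInputGraph (G : RGraph NodeLab Unit) : Prop :=
  G.IsTLRG ∧ (∀ v, G.l v = some .square) ∧ G.rootCount = 1

/-- no rule of `Rs` is applicable to `H` -/
def InNormalForm {LV LE : Type} (Rs : Set (Rule LV LE)) (H : RGraph LV LE) : Prop :=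
  ¬ ∃ r ∈ Rs, ∃ g : Morphism r.L H, r.Applicable H g

section TreeProgressProof

open NodeLab

/-- The invariant maintained along derivations. -/
def TPInv (H : RGraph NodeLab Unit) : Prop :=
  H.IsTLRG ∧
  (∃ x, H.p x = some true) ∧
  (∀ x y, H.p x = some true → H.p y = some true → x = y) ∧
  (∀ v, H.p v = some true → H.l v = some NodeLab.square) ∧
  (∀ v, H.l v = some NodeLab.tri →
    ∃ e, H.s e = v ∧ (H.l (H.t e) = some NodeLab.tri ∨ H.p (H.t e) = some true)) ∧
  IsConnectedGraph H ∧
  ¬ HasUndirCycle H ∧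
  (∀ v, Nat.card {e : H.E // H.t e = v} ≤ 1)

lemma walk_map {LV LE : Type} {A B : RGraph LV LE} (f : Morphism A B) :
    ∀ (l : List (A.E × Bool)) (v w : A.V), IsUndirWalk A v l w →
      IsUndirWalk B (f.fV v) (l.map fun p => (f.fE p.1, p.2)) (f.fV w) := by
  intro l
  induction l with
  | nil => intro v w h; exact congrArg f.fV h
  | cons p rest ih =>
    intro v w h
    obtain ⟨e, b⟩ := p
    cases b with
    | true =>
      obtain ⟨h1, h2⟩ := h
      exact ⟨by rw [← f.src e, h1], by rw [← f.tgt e]; exact ih _ _ h2⟩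
    | false =>
      obtain ⟨h1, h2⟩ := h
      exact ⟨by rw [← f.tgt e, h1], by rw [← f.src e]; exact ih _ _ h2⟩

lemma fE_inj_of_iso {LV LE : Type} {A B : RGraph LV LE} (i : Iso A B) :
    Function.Injective i.invMor.fE := by
  intro x y h
  have := congrArg i.toMor.fE h
  rwa [i.rightE, i.rightE] at this

lemma inv_of_iso {A B : RGraph NodeLab Unit} (i : Iso A B) (hA : TPInv A) : TPInv B := by
  obtain ⟨⟨hl, hp⟩, ⟨x0, hx0⟩, huniq, hrootsq, htri, hconn, hcyc, hdeg⟩ := hA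
  refine ⟨⟨?_, ?_⟩, ⟨i.toMor.fV x0, i.toMor.rootedness _ _ hx0⟩, ?_, ?_, ?_, ?_, ?_, ?_⟩
  · intro v
    obtain ⟨c, hc⟩ := Option.isSome_iff_exists.mp (hl (i.invMor.fV v))
    have := i.toMor.nodeLabel _ _ hc
    rw [i.rightV] at this
    exact Option.isSome_iff_exists.mpr ⟨c, this⟩
  · intro v
    obtain ⟨c, hc⟩ := Option.isSome_iff_exists.mp (hp (i.invMor.fV v))
    have := i.toMor.rootedness _ _ hc
    rw [i.rightV] at this
    exact Option.isSome_iff_exists.mpr ⟨c, this⟩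
  · intro x y hx hy
    have hx' := i.invMor.rootedness _ _ hx
    have hy' := i.invMor.rootedness _ _ hy
    have := huniq _ _ hx' hy'
    have := congrArg i.toMor.fV this
    rwa [i.rightV, i.rightV] at this
  · intro v hv
    have hv' := i.invMor.rootedness _ _ hv
    have := i.toMor.nodeLabel _ _ (hrootsq _ hv')
    rwa [i.rightV] at this
  · intro v hv
    have hv' : A.l (i.invMor.fV v) = some NodeLab.tri := by
      obtain ⟨c, hc⟩ := Option.isSome_iff_exists.mp (hl (i.invMor.fV v))
      have := i.toMor.nodeLabel _ _ hc
      rw [i.rightV, hv] at this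
      rw [hc]; exact congrArg _ (Option.some_injective _ this).symm
    obtain ⟨e, he, hte⟩ := htri _ hv'
    refine ⟨i.toMor.fE e, ?_, ?_⟩
    · rw [← i.toMor.src e, he, i.rightV]
    · rw [← i.toMor.tgt e]
      rcases hte with h | h
      · exact Or.inl (i.toMor.nodeLabel _ _ h)
      · exact Or.inr (i.toMor.rootedness _ _ h)
  · intro v w
    obtain ⟨l, hl'⟩ := hconn (i.invMor.fV v) (i.invMor.fV w)
    have := walk_map i.toMor l _ _ hl'
    rw [i.rightV, i.rightV] at this
    exact ⟨_, this⟩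
  · rintro ⟨v, l, hne, hwalk, hnodup⟩
    apply hcyc
    refine ⟨i.invMor.fV v, _, ?_, walk_map i.invMor l _ _ hwalk, ?_⟩
    · simpa using hne
    · rw [List.map_map]
      have : (Prod.fst ∘ fun p : B.E × Bool => (i.invMor.fE p.1, p.2)) =
          i.invMor.fE ∘ Prod.fst := rfl
      rw [this, ← List.map_map]
      exact hnodup.map (fE_inj_of_iso i)
  · intro v
    haveI := A.finE
    have hle : Nat.card {e : B.E // B.t e = v} ≤
        Nat.card {e : A.E // A.t e = i.invMor.fV v} := by
      apply Nat.card_le_card_of_injective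
        (fun e => ⟨i.invMor.fE e.1, by rw [← i.invMor.tgt, e.2]⟩)
      intro a b hab
      exact Subtype.ext (fE_inj_of_iso i (congrArg Subtype.val hab))
    exact hle.trans (hdeg _)

end TreeProgressProof

section TPProgress

attribute [local instance] Classical.propDecidable

lemma tp_noloop {H : RGraph NodeLab Unit} (hcyc : ¬ HasUndirCycle H) :
    ∀ e, H.s e ≠ H.t e := by
  intro e he
  exact hcyc ⟨H.s e, [(e, true)], by simp, ⟨rfl, he.symm⟩, by simp⟩

lemma tp_card_le_one {α : Type} [Finite α] (h : Nat.card α ≤ 1) (a b : α) : a = b := by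
  haveI : Nonempty α := ⟨a⟩
  have h1 : 0 < Nat.card α := Nat.card_pos
  have : Nat.card α = 1 := le_antisymm h h1
  obtain ⟨x, hx⟩ := Nat.card_eq_one_iff_exists.mp this
  rw [hx a, hx b]

/-- From the invariant: no edge from the unique root to a `△`-node (else a directed
cycle arises from the `△`-chain condition). -/
lemma tp_no_tri_child {H : RGraph NodeLab Unit} (hinv : TPInv H)
    {v : H.V} (hv : H.p v = some true) {e0 : H.E} (hs : H.s e0 = v)
    (ht : H.l (H.t e0) = some NodeLab.tri) : False := by
  obtain ⟨⟨hl, hp⟩, _, huniq, hrootsq, htri, hconn, hcyc, hdeg⟩ := hinv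
  haveI := H.finV
  -- choice of an outgoing edge at each relevant node
  have hQnext : ∀ x : H.V,
      (H.l x = some NodeLab.tri ∨ H.p x = some true) →
      ∃ e, H.s e = x ∧ (H.l (H.t e) = some NodeLab.tri ∨ H.p (H.t e) = some true) := by
    intro x hx
    rcases hx with hx | hx
    · exact htri x hx
    · exact ⟨e0, by rw [hs, huniq x v hx hv], Or.inl ht⟩
  classical
  set Q : H.V → Prop := fun x => H.l x = some NodeLab.tri ∨ H.p x = some true with hQ
  let next : H.V → H.E := fun x => if h : Q x then (hQnext x h).choose else e0
  let f : H.V → H.V := fun x => H.t (next x)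
  have hstep : ∀ x, Q x → H.s (next x) = x ∧ Q (f x) := by
    intro x hx
    have : next x = (hQnext x hx).choose := dif_pos hx
    constructor
    · rw [this]; exact (hQnext x hx).choose_spec.1
    · show H.l (H.t (next x)) = some NodeLab.tri ∨ H.p (H.t (next x)) = some true
      rw [this]; exact (hQnext x hx).choose_spec.2
  set w := H.t e0 with hw
  have hQw : Q w := Or.inl ht
  let x : ℕ → H.V := fun n => f^[n] w
  have hQx : ∀ n, Q (x n) := by
    intro n
    induction n with
    | zero => exact hQw
    | succ k ih =>
      show Q (f^[k+1] w)
      rw [Function.iterate_succ_apply']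
      exact (hstep _ ih).2
  have hsx : ∀ n, H.s (next (x n)) = x n := fun n => (hstep _ (hQx n)).1
  have htx : ∀ n, H.t (next (x n)) = x (n + 1) := by
    intro n
    show H.t (next (f^[n] w)) = f^[n+1] w
    rw [Function.iterate_succ_apply']
  -- pigeonhole
  have hrep : ∃ j, ∃ i, i < j ∧ x i = x j := by
    obtain ⟨m, n, hmn, heq⟩ := Finite.exists_ne_map_eq_of_infinite x
    rcases lt_or_gt_of_ne hmn with h | h
    · exact ⟨n, m, h, heq⟩
    · exact ⟨m, n, h, heq.symm⟩
  let N := Nat.find hrep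
  obtain ⟨i, hiN, hxiN⟩ : ∃ i, i < N ∧ x i = x N := Nat.find_spec hrep
  have hinj : ∀ a b, a < N → b < N → x a = x b → a = b := by
    intro a b ha hb hab
    by_contra hne
    rcases lt_or_gt_of_ne hne with h | h
    · exact Nat.find_min hrep hb ⟨a, h, hab⟩
    · exact Nat.find_min hrep ha ⟨b, h, hab.symm⟩
  -- build the closed walk
  have hchain : ∀ (len a : ℕ), IsUndirWalk H (x a)
      ((List.range len).map fun k => (next (x (a + k)), true)) (x (a + len)) := by
    intro len
    induction len with
    | zero => intro a; rfl
    | succ n ih =>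
      intro a
      rw [List.range_succ_eq_map, List.map_cons]
      refine ⟨by rw [Nat.add_zero]; exact hsx a, ?_⟩
      have h0 : H.t (next (x (a + 0))) = x (a + 1) := by rw [Nat.add_zero]; exact htx a
      rw [h0, List.map_map]
      have heqf : ((fun k => (next (x (a + k)), true)) ∘ Nat.succ) =
          (fun k => (next (x (a + 1 + k)), true)) := by
        funext k
        have hk : a + Nat.succ k = a + 1 + k := by omega
        simp only [Function.comp]
        rw [hk]
      rw [heqf]
      have heqn : a + (n + 1) = a + 1 + n := by omega
      rw [heqn]
      exact ih (a + 1)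
  apply hcyc
  refine ⟨x i, (List.range (N - i)).map fun k => (next (x (i + k)), true), ?_, ?_, ?_⟩
  · simp [Nat.sub_eq_zero_iff_le]; omega
  · have := hchain (N - i) i
    have heq : i + (N - i) = N := by omega
    rw [heq, ← hxiN] at this
    exact this
  · rw [List.map_map]
    have heqf : (Prod.fst ∘ fun k => (next (x (i + k)), true)) =
        fun k => next (x (i + k)) := rfl
    rw [heqf]
    refine List.Nodup.map_on ?_ (List.nodup_range)
    intro a ha b hb hab
    simp only [List.mem_range] at ha hb
    have : x (i + a) = x (i + b) := by
      rw [← hsx (i + a), ← hsx (i + b), hab]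
    have := hinj (i + a) (i + b) (by omega) (by omega) this
    omega

end TPProgress

section TPProgress2

attribute [local instance] Classical.propDecidable

lemma fin2_vec_inj {α : Type} {a b : α} (hne : a ≠ b) : Function.Injective ![a, b] := by
  intro i j hij
  fin_cases i <;> fin_cases j <;> simp_all

lemma fin2_eq_one {v : Fin 2} (h : v ≠ 0) : v = 1 := by omega

/-- match for rule `r2` -/
def match_r2 {H : RGraph NodeLab Unit} (a b : H.V) (e : H.E)
    (hs : H.s e = a) (ht : H.t e = b)
    (hla : H.l a = some NodeLab.square) (hlb : H.l b = some NodeLab.square)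
    (hpa : H.p a = some true) (hpb : H.p b = some false) :
    Morphism r2.L H where
  fV := ![a, b]
  fE := fun _ => e
  src := fun _ => hs.symm
  tgt := fun _ => ht.symm
  edgeLabel := fun _ => Subsingleton.elim _ _
  nodeLabel := fun v' => by
    refine Fin.cases ?_ (fun i => Fin.cases ?_ (fun j => j.elim0) i) v' <;>
      · intro x hx
        have h := Option.some.inj hx
        subst h
        assumption
  rootedness := fun v' => by
    refine Fin.cases ?_ (fun i => Fin.cases ?_ (fun j => j.elim0) i) v' <;>
      · intro x hx
        have h := Option.some.inj hx
        subst h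
        assumption

/-- match for rule `r0` -/
def match_r0 {H : RGraph NodeLab Unit} (a b : H.V) (e : H.E)
    (hs : H.s e = a) (ht : H.t e = b)
    (hla : H.l a = some NodeLab.square) (hlb : H.l b = some NodeLab.square)
    (hpa : H.p a = some false) (hpb : H.p b = some true) :
    Morphism r0.L H where
  fV := ![a, b]
  fE := fun _ => e
  src := fun _ => hs.symm
  tgt := fun _ => ht.symm
  edgeLabel := fun _ => Subsingleton.elim _ _
  nodeLabel := fun v' => by
    refine Fin.cases ?_ (fun i => Fin.cases ?_ (fun j => j.elim0) i) v' <;>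
      · intro x hx
        have h := Option.some.inj hx
        subst h
        assumption
  rootedness := fun v' => by
    refine Fin.cases ?_ (fun i => Fin.cases ?_ (fun j => j.elim0) i) v' <;>
      · intro x hx
        have h := Option.some.inj hx
        subst h
        assumption

/-- match for rule `r1` -/
def match_r1 {H : RGraph NodeLab Unit} (a b : H.V) (e : H.E)
    (hs : H.s e = a) (ht : H.t e = b)
    (hla : H.l a = some NodeLab.tri) (hlb : H.l b = some NodeLab.square)
    (hpa : H.p a = some false) (hpb : H.p b = some true) :
    Morphism r1.L H where
  fV := ![a, b]
  fE := fun _ => e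
  src := fun _ => hs.symm
  tgt := fun _ => ht.symm
  edgeLabel := fun _ => Subsingleton.elim _ _
  nodeLabel := fun v' => by
    refine Fin.cases ?_ (fun i => Fin.cases ?_ (fun j => j.elim0) i) v' <;>
      · intro x hx
        have h := Option.some.inj hx
        subst h
        assumption
  rootedness := fun v' => by
    refine Fin.cases ?_ (fun i => Fin.cases ?_ (fun j => j.elim0) i) v' <;>
      · intro x hx
        have h := Option.some.inj hx
        subst h
        assumption

lemma tp_progress {H : RGraph NodeLab Unit} (hinv : TPInv H) :
    Nat.card H.V = 1 ∨ ∃ r ∈ TreeRules, ∃ g : Morphism r.L H, r.Applicable H g := by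
  haveI := H.finV
  haveI := H.finE
  have hinv' := hinv
  obtain ⟨⟨hl, hp⟩, ⟨v, hv⟩, huniq, hrootsq, htri, hconn, hcyc, hdeg⟩ := hinv
  by_cases hcard : Nat.card H.V = 1
  · exact Or.inl hcard
  right
  have hex : ∃ u : H.V, u ≠ v := by
    by_contra hno
    push_neg at hno
    exact hcard (Nat.card_eq_one_iff_exists.mpr ⟨v, fun a => (hno a)⟩)
  by_cases hout : ∃ e, H.s e = v
  · -- root has an outgoing edge: rule r2 applies
    obtain ⟨e, he⟩ := hout
    have hwv : H.t e ≠ v := fun hwv => tp_noloop hcyc e (by rw [he, ← hwv])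
    have hpw : H.p (H.t e) = some false := by
      obtain ⟨b, hb⟩ := Option.isSome_iff_exists.mp (hp (H.t e))
      cases b with
      | true => exact absurd (huniq _ v hb hv) hwv
      | false => exact hb
    have hlw : H.l (H.t e) = some NodeLab.square := by
      obtain ⟨c, hc⟩ := Option.isSome_iff_exists.mp (hl (H.t e))
      cases c with
      | tri => exact absurd (tp_no_tri_child hinv' hv he hc) (fun h => h)
      | square => exact hc
    refine ⟨r2, by simp [TreeRules],
      match_r2 v (H.t e) e he rfl (hrootsq v hv) hlw hv hpw, ?_, ?_⟩
    · exact ⟨fin2_vec_inj (Ne.symm hwv), fun a b _ => Subsingleton.elim (α := Unit) a b⟩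
    · intro e'' _ v' hv'
      exact absurd rfl (hv' v')
  · -- root is a leaf: rule r0 or r1 applies
    push_neg at hout
    obtain ⟨u, hu⟩ := hex
    obtain ⟨lw, hlw⟩ := hconn u v
    have hfind : ∀ (l : List (H.E × Bool)) (u : H.V), u ≠ v → IsUndirWalk H u l v →
        ∃ e, H.t e = v := by
      intro l
      induction l with
      | nil => intro u hu hw; exact absurd hw hu
      | cons p rest ih =>
        intro u hu hw
        obtain ⟨e, b⟩ := p
        cases b with
        | true =>
          obtain ⟨h1, h2⟩ := hw
          by_cases hte : H.t e = v
          · exact ⟨e, hte⟩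
          · exact ih _ hte h2
        | false =>
          obtain ⟨h1, h2⟩ := hw
          exact ih _ (hout e) h2
    obtain ⟨e, he⟩ := hfind lw u hu hlw
    have hu0v : H.s e ≠ v := hout e
    have hpu0 : H.p (H.s e) = some false := by
      obtain ⟨b, hb⟩ := Option.isSome_iff_exists.mp (hp (H.s e))
      cases b with
      | true => exact absurd (huniq _ v hb hv) hu0v
      | false => exact hb
    have hlv : H.l v = some NodeLab.square := hrootsq v hv
    have hdang : ∀ e'' : H.E, e'' ≠ e → H.s e'' ≠ v ∧ H.t e'' ≠ v := by
      intro e'' hne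
      refine ⟨hout e'', ?_⟩
      intro hte
      exact hne (congrArg Subtype.val
        (tp_card_le_one (hdeg v) (⟨e'', hte⟩ : {e' : H.E // H.t e' = v}) ⟨e, he⟩))
    obtain ⟨c, hc⟩ := Option.isSome_iff_exists.mp (hl (H.s e))
    have hdang0 : ∀ e'' : H.E, (∀ e' : Unit, e ≠ e'') →
        ∀ v' : Fin 2, (∀ k : Unit, (0 : Fin 2) ≠ v') →
          H.s e'' ≠ ![H.s e, v] v' ∧ H.t e'' ≠ ![H.s e, v] v' := by
      intro e'' he'' v' hv'
      have hv1 : v' = 1 := fin2_eq_one (fun h => hv' () h.symm)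
      subst hv1
      have hd := hdang e'' (fun h => he'' () h.symm)
      simpa using hd
    cases c with
    | square =>
      exact ⟨r0, by simp [TreeRules], match_r0 (H.s e) v e rfl he hc hlv hpu0 hv,
        ⟨fin2_vec_inj hu0v, fun a b _ => Subsingleton.elim (α := Unit) a b⟩, hdang0⟩
    | tri =>
      exact ⟨r1, by simp [TreeRules], match_r1 (H.s e) v e rfl he hc hlv hpu0 hv,
        ⟨fin2_vec_inj hu0v, fun a b _ => Subsingleton.elim (α := Unit) a b⟩, hdang0⟩

end TPProgress2

section TPInit

lemma walk_map' {LV LE : Type} {A B : RGraph LV LE} (fV : A.V → B.V) (fE : A.E → B.E)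
    (hs : ∀ e, fV (A.s e) = B.s (fE e)) (ht : ∀ e, fV (A.t e) = B.t (fE e)) :
    ∀ (l : List (A.E × Bool)) (v w : A.V), IsUndirWalk A v l w →
      IsUndirWalk B (fV v) (l.map fun p => (fE p.1, p.2)) (fV w) := by
  intro l
  induction l with
  | nil => intro v w h; exact congrArg fV h
  | cons p rest ih =>
    intro v w h
    obtain ⟨e, b⟩ := p
    cases b with
    | true =>
      obtain ⟨h1, h2⟩ := h
      exact ⟨by rw [← hs e, h1], by rw [← ht e]; exact ih _ _ h2⟩
    | false =>
      obtain ⟨h1, h2⟩ := h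
      exact ⟨by rw [← ht e, h1], by rw [← hs e]; exact ih _ _ h2⟩

def Iso.flip {LV LE : Type} {A B : RGraph LV LE} (i : Iso A B) : Iso B A :=
  ⟨i.invMor, i.toMor, i.rightV, i.rightE, i.leftV, i.leftE⟩

lemma tp_init {G : RGraph NodeLab Unit} (hG : IsInputGraph G) (hT : IsTree G) : TPInv G := by
  obtain ⟨⟨hl, hp⟩, hsq, hroot⟩ := hG
  obtain ⟨hne, hconn, hcyc, hdeg⟩ := hT
  haveI := G.finV
  obtain ⟨⟨x, hx⟩, hxu⟩ := Nat.card_eq_one_iff_exists.mp hroot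
  refine ⟨⟨hl, hp⟩, ⟨x, hx⟩, ?_, fun v _ => hsq v, ?_, hconn, hcyc, hdeg⟩
  · intro u w hu hw
    have h1 := hxu ⟨u, hu⟩
    have h2 := hxu ⟨w, hw⟩
    have h1' := congrArg Subtype.val h1
    have h2' := congrArg Subtype.val h2
    simp only at h1' h2'
    rw [h1', h2']
  · intro v hv
    rw [hsq v] at hv
    exact absurd (Option.some.inj hv) (by simp)

end TPInit

section TPr2

attribute [local instance] Classical.propDecidable

variable {H : RGraph NodeLab Unit}

/-- concrete description of the result of applying `r2`: relabel only -/
noncomputable def C2 (g : Morphism r2.L H) : RGraph NodeLab Unit where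
  V := H.V
  E := H.E
  finV := H.finV
  finE := H.finE
  s := H.s
  t := H.t
  m := H.m
  l := fun x => if x = g.fV (0 : Fin 2) then some NodeLab.tri
    else if x = g.fV (1 : Fin 2) then some NodeLab.square else H.l x
  p := fun x => if x = g.fV (0 : Fin 2) then some false
    else if x = g.fV (1 : Fin 2) then some true else H.p x

lemma fin2_cases (k : Fin 2) : k = 0 ∨ k = 1 := by omega

lemma notDelV2 (g : Morphism r2.L H) : ∀ x : H.V, x ∉ r2.DelV H g := by
  rintro x ⟨v, hv, _⟩
  exact hv v rfl

lemma delE2 (g : Morphism r2.L H) : ∀ x : H.E, x ∈ r2.DelE H g ↔ x = g.fE () := by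
  intro x
  constructor
  · rintro ⟨e, _, he⟩
    exact he ▸ rfl
  · rintro rfl
    exact ⟨(), fun k => k.elim, rfl⟩

lemma iso2 (g : Morphism r2.L H) (happ : r2.Applicable H g) :
    Nonempty (Iso (r2.result H g happ) (C2 g)) := by
  have hsrc : H.s (g.fE ()) = g.fV (0 : Fin 2) := (g.src ()).symm
  have htgt : H.t (g.fE ()) = g.fV (1 : Fin 2) := (g.tgt ()).symm
  -- value-level maps
  refine ⟨⟨⟨Sum.elim Subtype.val (fun y => absurd rfl (y.2 y.1)),
    Sum.elim Subtype.val (fun _ => g.fE ()), ?_, ?_, ?_, ?_, ?_⟩,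
    ⟨fun x => Sum.inl ⟨x, notDelV2 g x⟩,
     fun x => if h : x = g.fE () then Sum.inr ⟨(), fun k => k.elim⟩
       else Sum.inl ⟨x, fun hd => h ((delE2 g x).mp hd)⟩, ?_, ?_, ?_, ?_, ?_⟩,
    ?_, ?_, ?_, ?_⟩⟩
  · -- toMor src
    rintro (x | y)
    · rfl
    · show Sum.elim _ _ (if hk : ∃ k : r2.K.V, r2.incR.fV k = r2.R.s y.1 then _ else _) = _
      have hex : ∃ k : r2.K.V, r2.incR.fV k = r2.R.s y.1 := ⟨(0 : Fin 2), rfl⟩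
      rw [dif_pos hex]
      have h0 : hex.choose = (0 : Fin 2) := hex.choose_spec
      show g.fV (r2.incL.fV hex.choose) = H.s (g.fE ())
      rw [h0, hsrc]
      rfl
  · -- toMor tgt
    rintro (x | y)
    · rfl
    · show Sum.elim _ _ (if hk : ∃ k : r2.K.V, r2.incR.fV k = r2.R.t y.1 then _ else _) = _
      have hex : ∃ k : r2.K.V, r2.incR.fV k = r2.R.t y.1 := ⟨(1 : Fin 2), rfl⟩
      rw [dif_pos hex]
      have h0 : hex.choose = (1 : Fin 2) := hex.choose_spec
      show g.fV (r2.incL.fV hex.choose) = H.t (g.fE ())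
      rw [h0, htgt]
      rfl
  · -- toMor edgeLabel
    rintro (x | y) <;> exact Subsingleton.elim _ _
  · -- toMor nodeLabel
    rintro (x | y)
    case inr => exact absurd rfl (y.2 y.1)
    intro c hc
    show (C2 g).l x.1 = some c
    show (if x.1 = g.fV (0 : Fin 2) then some NodeLab.tri
      else if x.1 = g.fV (1 : Fin 2) then some NodeLab.square else H.l x.1) = some c
    have hc' : (if hk : ∃ k : r2.K.V, r2.K.l k = none ∧ g.fV (r2.incL.fV k) = x.1
        then r2.R.l (r2.incR.fV hk.choose) else H.l x.1) = some c := hc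
    by_cases h0 : x.1 = g.fV (0 : Fin 2)
    · rw [if_pos h0]
      have hex : ∃ k : r2.K.V, r2.K.l k = none ∧ g.fV (r2.incL.fV k) = x.1 :=
        ⟨(0 : Fin 2), rfl, h0.symm⟩
      rw [dif_pos hex] at hc'
      have hch : g.fV hex.choose = x.1 := hex.choose_spec.2
      have : hex.choose = (0 : Fin 2) := happ.1.1 (hch.trans h0)
      rw [this] at hc'
      exact hc'
    · by_cases h1 : x.1 = g.fV (1 : Fin 2)
      · rw [if_neg h0, if_pos h1]
        have hex : ∃ k : r2.K.V, r2.K.l k = none ∧ g.fV (r2.incL.fV k) = x.1 :=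
          ⟨(1 : Fin 2), rfl, h1.symm⟩
        rw [dif_pos hex] at hc'
        have hch : g.fV hex.choose = x.1 := hex.choose_spec.2
        have : hex.choose = (1 : Fin 2) := happ.1.1 (hch.trans h1)
        rw [this] at hc'
        exact hc'
      · rw [if_neg h0, if_neg h1]
        have hnex : ¬ ∃ k : r2.K.V, r2.K.l k = none ∧ g.fV (r2.incL.fV k) = x.1 := by
          rintro ⟨k, -, hk⟩
          have hk' : g.fV k = x.1 := hk
          rcases fin2_cases k with hk2 | hk2 <;> rw [hk2] at hk'
          · exact h0 hk'.symm
          · exact h1 hk'.symm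
        rw [dif_neg hnex] at hc'
        exact hc'
  · -- toMor rootedness
    rintro (x | y)
    case inr => exact absurd rfl (y.2 y.1)
    intro c hc
    show (if x.1 = g.fV (0 : Fin 2) then some false
      else if x.1 = g.fV (1 : Fin 2) then some true else H.p x.1) = some c
    have hc' : (if hk : ∃ k : r2.K.V, r2.K.p k = none ∧ g.fV (r2.incL.fV k) = x.1
        then r2.R.p (r2.incR.fV hk.choose) else H.p x.1) = some c := hc
    by_cases h0 : x.1 = g.fV (0 : Fin 2)
    · rw [if_pos h0]
      have hex : ∃ k : r2.K.V, r2.K.p k = none ∧ g.fV (r2.incL.fV k) = x.1 :=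
        ⟨(0 : Fin 2), rfl, h0.symm⟩
      rw [dif_pos hex] at hc'
      have hch : g.fV hex.choose = x.1 := hex.choose_spec.2
      have : hex.choose = (0 : Fin 2) := happ.1.1 (hch.trans h0)
      rw [this] at hc'
      exact hc'
    · by_cases h1 : x.1 = g.fV (1 : Fin 2)
      · rw [if_neg h0, if_pos h1]
        have hex : ∃ k : r2.K.V, r2.K.p k = none ∧ g.fV (r2.incL.fV k) = x.1 :=
          ⟨(1 : Fin 2), rfl, h1.symm⟩
        rw [dif_pos hex] at hc'
        have hch : g.fV hex.choose = x.1 := hex.choose_spec.2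
        have : hex.choose = (1 : Fin 2) := happ.1.1 (hch.trans h1)
        rw [this] at hc'
        exact hc'
      · rw [if_neg h0, if_neg h1]
        have hnex : ¬ ∃ k : r2.K.V, r2.K.p k = none ∧ g.fV (r2.incL.fV k) = x.1 := by
          rintro ⟨k, -, hk⟩
          have hk' : g.fV k = x.1 := hk
          rcases fin2_cases k with hk2 | hk2 <;> rw [hk2] at hk'
          · exact h0 hk'.symm
          · exact h1 hk'.symm
        rw [dif_neg hnex] at hc'
        exact hc'
  · -- invMor src
    intro e
    change Sum.inl _ = (r2.result H g happ).s (dite (e = g.fE ())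
      (fun h => Sum.inr ⟨(), fun k => k.elim⟩)
      (fun h => Sum.inl ⟨e, fun hd => h ((delE2 g e).mp hd)⟩))
    by_cases h : e = g.fE ()
    · erw [dif_pos h]
      show Sum.inl _ = (if hk : ∃ k : r2.K.V, r2.incR.fV k = r2.R.s () then _ else _)
      have hex : ∃ k : r2.K.V, r2.incR.fV k = r2.R.s () := ⟨(0 : Fin 2), rfl⟩
      rw [dif_pos hex]
      have h0 : hex.choose = (0 : Fin 2) := hex.choose_spec
      apply congrArg Sum.inl
      apply Subtype.ext
      show H.s e = g.fV (r2.incL.fV hex.choose)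
      rw [h0, h, hsrc]
      rfl
    · erw [dif_neg h]
      rfl
  · -- invMor tgt
    intro e
    change Sum.inl _ = (r2.result H g happ).t (dite (e = g.fE ())
      (fun h => Sum.inr ⟨(), fun k => k.elim⟩)
      (fun h => Sum.inl ⟨e, fun hd => h ((delE2 g e).mp hd)⟩))
    by_cases h : e = g.fE ()
    · erw [dif_pos h]
      show Sum.inl _ = (if hk : ∃ k : r2.K.V, r2.incR.fV k = r2.R.t () then _ else _)
      have hex : ∃ k : r2.K.V, r2.incR.fV k = r2.R.t () := ⟨(1 : Fin 2), rfl⟩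
      rw [dif_pos hex]
      have h0 : hex.choose = (1 : Fin 2) := hex.choose_spec
      apply congrArg Sum.inl
      apply Subtype.ext
      show H.t e = g.fV (r2.incL.fV hex.choose)
      rw [h0, h, htgt]
      rfl
    · erw [dif_neg h]
      rfl
  · -- invMor edgeLabel
    intro e
    exact Subsingleton.elim _ _
  · -- invMor nodeLabel
    intro v c hc
    show (if hk : ∃ k : r2.K.V, r2.K.l k = none ∧ g.fV (r2.incL.fV k) = v
        then r2.R.l (r2.incR.fV hk.choose) else H.l v) = some c
    have hc' : (if v = g.fV (0 : Fin 2) then some NodeLab.tri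
      else if v = g.fV (1 : Fin 2) then some NodeLab.square else H.l v) = some c := hc
    by_cases h0 : v = g.fV (0 : Fin 2)
    · rw [if_pos h0] at hc'
      have hex : ∃ k : r2.K.V, r2.K.l k = none ∧ g.fV (r2.incL.fV k) = v :=
        ⟨(0 : Fin 2), rfl, h0.symm⟩
      rw [dif_pos hex]
      have hch : g.fV hex.choose = v := hex.choose_spec.2
      have : hex.choose = (0 : Fin 2) := happ.1.1 (hch.trans h0)
      rw [this]
      exact hc'
    · by_cases h1 : v = g.fV (1 : Fin 2)
      · rw [if_neg h0, if_pos h1] at hc'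
        have hex : ∃ k : r2.K.V, r2.K.l k = none ∧ g.fV (r2.incL.fV k) = v :=
          ⟨(1 : Fin 2), rfl, h1.symm⟩
        rw [dif_pos hex]
        have hch : g.fV hex.choose = v := hex.choose_spec.2
        have : hex.choose = (1 : Fin 2) := happ.1.1 (hch.trans h1)
        rw [this]
        exact hc'
      · rw [if_neg h0, if_neg h1] at hc'
        have hnex : ¬ ∃ k : r2.K.V, r2.K.l k = none ∧ g.fV (r2.incL.fV k) = v := by
          rintro ⟨k, -, hk⟩
          have hk' : g.fV k = v := hk
          rcases fin2_cases k with hk2 | hk2 <;> rw [hk2] at hk'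
          · exact h0 hk'.symm
          · exact h1 hk'.symm
        rw [dif_neg hnex]
        exact hc'
  · -- invMor rootedness
    intro v c hc
    show (if hk : ∃ k : r2.K.V, r2.K.p k = none ∧ g.fV (r2.incL.fV k) = v
        then r2.R.p (r2.incR.fV hk.choose) else H.p v) = some c
    have hc' : (if v = g.fV (0 : Fin 2) then some false
      else if v = g.fV (1 : Fin 2) then some true else H.p v) = some c := hc
    by_cases h0 : v = g.fV (0 : Fin 2)
    · rw [if_pos h0] at hc'
      have hex : ∃ k : r2.K.V, r2.K.p k = none ∧ g.fV (r2.incL.fV k) = v :=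
        ⟨(0 : Fin 2), rfl, h0.symm⟩
      rw [dif_pos hex]
      have hch : g.fV hex.choose = v := hex.choose_spec.2
      have : hex.choose = (0 : Fin 2) := happ.1.1 (hch.trans h0)
      rw [this]
      exact hc'
    · by_cases h1 : v = g.fV (1 : Fin 2)
      · rw [if_neg h0, if_pos h1] at hc'
        have hex : ∃ k : r2.K.V, r2.K.p k = none ∧ g.fV (r2.incL.fV k) = v :=
          ⟨(1 : Fin 2), rfl, h1.symm⟩
        rw [dif_pos hex]
        have hch : g.fV hex.choose = v := hex.choose_spec.2
        have : hex.choose = (1 : Fin 2) := happ.1.1 (hch.trans h1)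
        rw [this]
        exact hc'
      · rw [if_neg h0, if_neg h1] at hc'
        have hnex : ¬ ∃ k : r2.K.V, r2.K.p k = none ∧ g.fV (r2.incL.fV k) = v := by
          rintro ⟨k, -, hk⟩
          have hk' : g.fV k = v := hk
          rcases fin2_cases k with hk2 | hk2 <;> rw [hk2] at hk'
          · exact h0 hk'.symm
          · exact h1 hk'.symm
        rw [dif_neg hnex]
        exact hc'
  · -- leftV
    rintro (x | y)
    · exact congrArg Sum.inl (Subtype.ext rfl)
    · exact absurd rfl (y.2 y.1)
  · -- leftE
    rintro (x | y)
    · show (if h : x.1 = g.fE () then _ else _) = _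
      have h : x.1 ≠ g.fE () := fun h => x.2 ((delE2 g x.1).mpr h)
      erw [dif_neg h]
      exact congrArg Sum.inl (Subtype.ext rfl)
    · show (if h : g.fE () = g.fE () then _ else _) = _
      erw [dif_pos rfl]
      exact congrArg Sum.inr (Subtype.ext rfl)
  · -- rightV
    intro v
    rfl
  · -- rightE
    intro e
    by_cases h : e = g.fE ()
    · show Sum.elim _ _ (if h' : e = g.fE () then _ else _) = e
      rw [dif_pos h]
      exact h.symm
    · show Sum.elim _ _ (if h' : e = g.fE () then _ else _) = e
      rw [dif_neg h]
      rfl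

end TPr2

section TPr2inv

attribute [local instance] Classical.propDecidable

variable {H : RGraph NodeLab Unit}

lemma inv_C2 (g : Morphism r2.L H) (happ : r2.Applicable H g) (hinv : TPInv H) :
    TPInv (C2 g) := by
  obtain ⟨⟨hl, hp⟩, ⟨rt, hrt⟩, huniq, hrootsq, htri, hconn, hcyc, hdeg⟩ := hinv
  have hpa : H.p (g.fV (0 : Fin 2)) = some true := g.rootedness _ _ rfl
  have hpb : H.p (g.fV (1 : Fin 2)) = some false := g.rootedness _ _ rfl
  have hlb : H.l (g.fV (1 : Fin 2)) = some NodeLab.square := g.nodeLabel _ _ rfl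
  have hsrc : H.s (g.fE ()) = g.fV (0 : Fin 2) := (g.src ()).symm
  have htgt : H.t (g.fE ()) = g.fV (1 : Fin 2) := (g.tgt ()).symm
  have hab : g.fV (0 : Fin 2) ≠ g.fV (1 : Fin 2) := by
    intro h
    have h2 : (0 : Fin 2) = 1 := happ.1.1 h
    exact absurd h2 (by decide)
  have hpC : ∀ z, (C2 g).p z = (if z = g.fV (0 : Fin 2) then some false
      else if z = g.fV (1 : Fin 2) then some true else H.p z) := fun z => rfl
  have hlC : ∀ z, (C2 g).l z = (if z = g.fV (0 : Fin 2) then some NodeLab.tri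
      else if z = g.fV (1 : Fin 2) then some NodeLab.square else H.l z) := fun z => rfl
  have hkey : ∀ z, (C2 g).p z = some true → z = g.fV (1 : Fin 2) := by
    intro z hz
    rw [hpC] at hz
    split_ifs at hz with h0 h1
    · exact absurd hz (by simp)
    · exact h1
    · exact absurd (huniq z _ hz hpa) h0
  have hpb' : (C2 g).p (g.fV (1 : Fin 2)) = some true := by
    erw [hpC]
    erw [if_neg (fun h => hab h.symm), if_pos rfl]
  refine ⟨⟨?_, ?_⟩, ⟨g.fV (1 : Fin 2), hpb'⟩, ?_, ?_, ?_, ?_, ?_, ?_⟩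
  · intro v
    rw [hlC]
    split_ifs with h0 h1
    · rfl
    · rfl
    · exact hl v
  · intro v
    rw [hpC]
    split_ifs with h0 h1
    · rfl
    · rfl
    · exact hp v
  · intro x y hx hy
    rw [hkey x hx, hkey y hy]
  · intro v hv
    erw [hkey v hv, hlC]
    erw [if_neg (fun h => hab h.symm), if_pos rfl]
  · intro v hv
    rw [hlC] at hv
    by_cases h0 : v = g.fV (0 : Fin 2)
    · refine ⟨g.fE (), ?_, Or.inr ?_⟩
      · show H.s (g.fE ()) = v
        rw [hsrc, h0]
      · show (C2 g).p (H.t (g.fE ())) = some true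
        rw [htgt]
        exact hpb'
    · rw [if_neg h0] at hv
      by_cases h1 : v = g.fV (1 : Fin 2)
      · rw [if_pos h1] at hv
        simp at hv
      · rw [if_neg h1] at hv
        obtain ⟨e, hse, hte⟩ := htri v hv
        refine ⟨e, hse, ?_⟩
        rcases hte with hlw | hpw
        · by_cases hw0 : H.t e = g.fV (0 : Fin 2)
          · refine Or.inl ?_
            show (C2 g).l (H.t e) = some NodeLab.tri
            erw [hlC, if_pos hw0]
          · have hw1 : H.t e ≠ g.fV (1 : Fin 2) := by
              intro h
              rw [h, hlb] at hlw
              simp at hlw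
            refine Or.inl ?_
            show (C2 g).l (H.t e) = some NodeLab.tri
            erw [hlC, if_neg hw0, if_neg hw1]
            exact hlw
        · have hw0 : H.t e = g.fV (0 : Fin 2) := huniq _ _ hpw hpa
          refine Or.inl ?_
          show (C2 g).l (H.t e) = some NodeLab.tri
          erw [hlC, if_pos hw0]
  · intro v w
    obtain ⟨l, hl'⟩ := hconn v w
    exact ⟨_, walk_map' (A := H) (B := C2 g) id id (fun _ => rfl) (fun _ => rfl) l v w hl'⟩
  · rintro ⟨v, l, hne, hw, hnd⟩
    apply hcyc
    refine ⟨v, l, hne, ?_, hnd⟩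
    have hw' := walk_map' (A := C2 g) (B := H) id id (fun _ => rfl) (fun _ => rfl) l v v hw
    exact cast (congrArg (fun l' => IsUndirWalk H v l' v) (List.map_id'' (f := fun p : H.E × Bool => (id p.1, p.2)) (fun _ => rfl) l)) hw'
  · intro v
    exact hdeg v

lemma inv_result2 (g : Morphism r2.L H) (happ : r2.Applicable H g) (hinv : TPInv H) :
    TPInv (r2.result H g happ) := by
  obtain ⟨i⟩ := iso2 g happ
  exact inv_of_iso (Iso.flip i) (inv_C2 g happ hinv)

end TPr2inv

section TPr0

attribute [local instance] Classical.propDecidable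

variable {H : RGraph NodeLab Unit}

lemma walk_avoid {b : H.V} {e0 : H.E}
    (hs0 : H.s e0 ≠ b) (ht0 : H.t e0 = b)
    (honly : ∀ e, e ≠ e0 → H.s e ≠ b ∧ H.t e ≠ b) :
    ∀ (n : ℕ) (l : List (H.E × Bool)) (u w : H.V), l.length ≤ n → u ≠ b → w ≠ b →
      IsUndirWalk H u l w → ∃ l', IsUndirWalk H u l' w ∧ ∀ p ∈ l', p.1 ≠ e0 := by
  intro n
  induction n with
  | zero =>
    intro l u w hlen hu hw hwalk
    have hl : l = [] := List.eq_nil_of_length_eq_zero (Nat.le_zero.mp hlen)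
    subst hl
    exact ⟨[], hwalk, by simp⟩
  | succ n ih =>
    intro l u w hlen hu hw hwalk
    rcases l with _ | ⟨⟨e, bo⟩, rest⟩
    · exact ⟨[], hwalk, by simp⟩
    cases bo
    · -- step (e, false) : from t e = u to s e
      obtain ⟨h1, h2⟩ := hwalk
      have hee : e ≠ e0 := fun h => hu ((h ▸ h1).symm.trans ht0)
      have hse : H.s e ≠ b := (honly e hee).1
      obtain ⟨l', hw', hav⟩ := ih rest (H.s e) w (by simp at hlen; omega) hse hw h2
      refine ⟨(e, false) :: l', ⟨h1, hw'⟩, ?_⟩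
      intro p hp
      rcases List.mem_cons.mp hp with rfl | hp'
      · exact hee
      · exact hav p hp'
    · -- step (e, true) : from s e = u to t e
      obtain ⟨h1, h2⟩ := hwalk
      by_cases he : e = e0
      · rw [he] at h1 h2
        rcases rest with _ | ⟨⟨e2, b2⟩, rest2⟩
        · exact absurd (h2.symm.trans ht0) hw
        cases b2
        · obtain ⟨h3, h4⟩ := h2
          by_cases he2 : e2 = e0
          · rw [he2] at h4
            rw [h1] at h4
            obtain ⟨l', hw', hav⟩ := ih rest2 u w (by simp at hlen ⊢; omega) hu hw h4
            exact ⟨l', hw', hav⟩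
          · rw [ht0] at h3
            exact absurd h3 (honly e2 he2).2
        · obtain ⟨h3, h4⟩ := h2
          by_cases he2 : e2 = e0
          · rw [he2, ht0] at h3
            exact absurd h3 hs0
          · rw [ht0] at h3
            exact absurd h3 (honly e2 he2).1
      · have hte : H.t e ≠ b := (honly e he).2
        obtain ⟨l', hw', hav⟩ := ih rest (H.t e) w (by simp at hlen; omega) hte hw h2
        refine ⟨(e, true) :: l', ⟨h1, hw'⟩, ?_⟩
        intro p hp
        rcases List.mem_cons.mp hp with rfl | hp'
        · exact he
        · exact hav p hp'

lemma inc0_ne_one : ∀ k : Unit, r0.incL.fV k ≠ (1 : Fin 2) :=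
  fun _ h => (by decide : ¬ (0 : Fin 2) = 1) h

lemma dang0 (g : Morphism r0.L H) (happ : r0.Applicable H g) :
    ∀ e : H.E, e ≠ g.fE () → H.s e ≠ g.fV (1 : Fin 2) ∧ H.t e ≠ g.fV (1 : Fin 2) := by
  intro e hne
  exact happ.2 e (fun e' h => hne h.symm) (1 : Fin 2) inc0_ne_one

lemma delV0 (g : Morphism r0.L H) : ∀ x : H.V, x ∈ r0.DelV H g ↔ x = g.fV (1 : Fin 2) := by
  intro x
  constructor
  · rintro ⟨v, hv, rfl⟩
    have hv0 : v ≠ (0 : Fin 2) := fun h => hv () h.symm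
    rcases fin2_cases v with h | h
    · exact absurd h hv0
    · rw [h]
  · rintro rfl
    exact ⟨(1 : Fin 2), inc0_ne_one, rfl⟩

lemma delE0 (g : Morphism r0.L H) : ∀ x : H.E, x ∈ r0.DelE H g ↔ x = g.fE () := by
  intro x
  constructor
  · rintro ⟨e, _, he⟩
    exact he ▸ rfl
  · rintro rfl
    exact ⟨(), fun k => k.elim, rfl⟩

/-- concrete description of the result of applying `r0`: delete the leaf and its
edge, relabel/re-root the parent -/
noncomputable def C0 (g : Morphism r0.L H) (happ : r0.Applicable H g) :
    RGraph NodeLab Unit where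
  V := {x : H.V // x ≠ g.fV (1 : Fin 2)}
  E := {x : H.E // x ≠ g.fE ()}
  finV := by haveI := H.finV; exact Subtype.finite
  finE := by haveI := H.finE; exact Subtype.finite
  s := fun e => ⟨H.s e.1, (dang0 g happ e.1 e.2).1⟩
  t := fun e => ⟨H.t e.1, (dang0 g happ e.1 e.2).2⟩
  m := fun e => H.m e.1
  l := fun v => if v.1 = g.fV (0 : Fin 2) then some NodeLab.square else H.l v.1
  p := fun v => if v.1 = g.fV (0 : Fin 2) then some true else H.p v.1

lemma iso0 (g : Morphism r0.L H) (happ : r0.Applicable H g) :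
    Nonempty (Iso (r0.result H g happ) (C0 g happ)) := by
  refine ⟨⟨⟨Sum.elim (fun x => ⟨x.1, fun h => x.2 ((delV0 g x.1).mpr h)⟩)
      (fun y => absurd rfl (y.2 y.1)),
    Sum.elim (fun x => ⟨x.1, fun h => x.2 ((delE0 g x.1).mpr h)⟩) (fun y => y.1.elim),
    ?_, ?_, ?_, ?_, ?_⟩,
    ⟨fun x => Sum.inl ⟨x.1, fun h => x.2 ((delV0 g x.1).mp h)⟩,
     fun x => Sum.inl ⟨x.1, fun h => x.2 ((delE0 g x.1).mp h)⟩, ?_, ?_, ?_, ?_, ?_⟩,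
    ?_, ?_, ?_, ?_⟩⟩
  · rintro (x | y)
    · exact Subtype.ext rfl
    · exact y.1.elim
  · rintro (x | y)
    · exact Subtype.ext rfl
    · exact y.1.elim
  · rintro (x | y)
    · exact Subsingleton.elim _ _
    · exact y.1.elim
  · -- toMor nodeLabel
    rintro (x | y)
    case inr => exact absurd rfl (y.2 y.1)
    intro c hc
    have hc' : (if hk : ∃ k : r0.K.V, r0.K.l k = none ∧ g.fV (r0.incL.fV k) = x.1
        then r0.R.l (r0.incR.fV hk.choose) else H.l x.1) = some c := hc
    show (if x.1 = g.fV (0 : Fin 2) then some NodeLab.square else H.l x.1) = some c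
    by_cases h0 : x.1 = g.fV (0 : Fin 2)
    · rw [if_pos h0]
      have hex : ∃ k : r0.K.V, r0.K.l k = none ∧ g.fV (r0.incL.fV k) = x.1 :=
        ⟨(), rfl, h0.symm⟩
      rw [dif_pos hex] at hc'
      exact hc'
    · rw [if_neg h0]
      have hnex : ¬ ∃ k : r0.K.V, r0.K.l k = none ∧ g.fV (r0.incL.fV k) = x.1 := by
        rintro ⟨k, -, hk⟩
        exact h0 ((hk : g.fV (0 : Fin 2) = x.1)).symm
      rw [dif_neg hnex] at hc'
      exact hc'
  · -- toMor rootedness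
    rintro (x | y)
    case inr => exact absurd rfl (y.2 y.1)
    intro c hc
    have hc' : (if hk : ∃ k : r0.K.V, r0.K.p k = none ∧ g.fV (r0.incL.fV k) = x.1
        then r0.R.p (r0.incR.fV hk.choose) else H.p x.1) = some c := hc
    show (if x.1 = g.fV (0 : Fin 2) then some true else H.p x.1) = some c
    by_cases h0 : x.1 = g.fV (0 : Fin 2)
    · rw [if_pos h0]
      have hex : ∃ k : r0.K.V, r0.K.p k = none ∧ g.fV (r0.incL.fV k) = x.1 :=
        ⟨(), rfl, h0.symm⟩
      rw [dif_pos hex] at hc'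
      exact hc'
    · rw [if_neg h0]
      have hnex : ¬ ∃ k : r0.K.V, r0.K.p k = none ∧ g.fV (r0.incL.fV k) = x.1 := by
        rintro ⟨k, -, hk⟩
        exact h0 ((hk : g.fV (0 : Fin 2) = x.1)).symm
      rw [dif_neg hnex] at hc'
      exact hc'
  · intro e
    exact congrArg Sum.inl (Subtype.ext rfl)
  · intro e
    exact congrArg Sum.inl (Subtype.ext rfl)
  · intro e
    exact Subsingleton.elim _ _
  · -- invMor nodeLabel
    intro v c hc
    have hc' : (if v.1 = g.fV (0 : Fin 2) then some NodeLab.square else H.l v.1)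
        = some c := hc
    show (if hk : ∃ k : r0.K.V, r0.K.l k = none ∧ g.fV (r0.incL.fV k) = v.1
        then r0.R.l (r0.incR.fV hk.choose) else H.l v.1) = some c
    by_cases h0 : v.1 = g.fV (0 : Fin 2)
    · rw [if_pos h0] at hc'
      have hex : ∃ k : r0.K.V, r0.K.l k = none ∧ g.fV (r0.incL.fV k) = v.1 :=
        ⟨(), rfl, h0.symm⟩
      rw [dif_pos hex]
      exact hc'
    · rw [if_neg h0] at hc'
      have hnex : ¬ ∃ k : r0.K.V, r0.K.l k = none ∧ g.fV (r0.incL.fV k) = v.1 := by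
        rintro ⟨k, -, hk⟩
        exact h0 ((hk : g.fV (0 : Fin 2) = v.1)).symm
      rw [dif_neg hnex]
      exact hc'
  · -- invMor rootedness
    intro v c hc
    have hc' : (if v.1 = g.fV (0 : Fin 2) then some true else H.p v.1) = some c := hc
    show (if hk : ∃ k : r0.K.V, r0.K.p k = none ∧ g.fV (r0.incL.fV k) = v.1
        then r0.R.p (r0.incR.fV hk.choose) else H.p v.1) = some c
    by_cases h0 : v.1 = g.fV (0 : Fin 2)
    · rw [if_pos h0] at hc'
      have hex : ∃ k : r0.K.V, r0.K.p k = none ∧ g.fV (r0.incL.fV k) = v.1 :=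
        ⟨(), rfl, h0.symm⟩
      rw [dif_pos hex]
      exact hc'
    · rw [if_neg h0] at hc'
      have hnex : ¬ ∃ k : r0.K.V, r0.K.p k = none ∧ g.fV (r0.incL.fV k) = v.1 := by
        rintro ⟨k, -, hk⟩
        exact h0 ((hk : g.fV (0 : Fin 2) = v.1)).symm
      rw [dif_neg hnex]
      exact hc'
  · rintro (x | y)
    · exact congrArg Sum.inl (Subtype.ext rfl)
    · exact absurd rfl (y.2 y.1)
  · rintro (x | y)
    · exact congrArg Sum.inl (Subtype.ext rfl)
    · exact y.1.elim
  · intro v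
    exact Subtype.ext rfl
  · intro e
    exact Subtype.ext rfl

end TPr0

section TPr0inv

attribute [local instance] Classical.propDecidable

variable {H : RGraph NodeLab Unit}

lemma inv_C0 (g : Morphism r0.L H) (happ : r0.Applicable H g) (hinv : TPInv H) :
    TPInv (C0 g happ) := by
  obtain ⟨⟨hl, hp⟩, ⟨rt, hrt⟩, huniq, hrootsq, htri, hconn, hcyc, hdeg⟩ := hinv
  have hpa : H.p (g.fV (0 : Fin 2)) = some false := g.rootedness _ _ rfl
  have hpb : H.p (g.fV (1 : Fin 2)) = some true := g.rootedness _ _ rfl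
  have hsrc : H.s (g.fE ()) = g.fV (0 : Fin 2) := (g.src ()).symm
  have htgt : H.t (g.fE ()) = g.fV (1 : Fin 2) := (g.tgt ()).symm
  have hab : g.fV (0 : Fin 2) ≠ g.fV (1 : Fin 2) := by
    intro h
    have h2 : (0 : Fin 2) = 1 := happ.1.1 h
    exact absurd h2 (by decide)
  have hlC : ∀ z : (C0 g happ).V, (C0 g happ).l z =
      (if z.1 = g.fV (0 : Fin 2) then some NodeLab.square else H.l z.1) := fun z => rfl
  have hpC : ∀ z : (C0 g happ).V, (C0 g happ).p z =
      (if z.1 = g.fV (0 : Fin 2) then some true else H.p z.1) := fun z => rfl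
  have hkey : ∀ z : (C0 g happ).V, (C0 g happ).p z = some true →
      z.1 = g.fV (0 : Fin 2) := by
    intro z hz
    rw [hpC] at hz
    split_ifs at hz with h0
    · exact h0
    · exact absurd (huniq z.1 _ hz hpb) z.2
  refine ⟨⟨?_, ?_⟩, ⟨⟨g.fV (0 : Fin 2), hab⟩, ?_⟩, ?_, ?_, ?_, ?_, ?_, ?_⟩
  · intro v
    rw [hlC]
    split_ifs with h0
    · rfl
    · exact hl v.1
  · intro v
    rw [hpC]
    split_ifs with h0
    · rfl
    · exact hp v.1
  · erw [hpC]
    rw [if_pos rfl]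
  · intro x y hx hy
    exact Subtype.ext ((hkey x hx).trans (hkey y hy).symm)
  · intro v hv
    rw [hlC, if_pos (hkey v hv)]
  · -- tri condition
    intro v hv
    rw [hlC] at hv
    split_ifs at hv with h0
    · simp at hv
    · obtain ⟨e, hse, hte⟩ := htri v.1 hv
      have hne : e ≠ g.fE () := by
        intro h
        rw [h, hsrc] at hse
        exact h0 hse.symm
      refine ⟨⟨e, hne⟩, Subtype.ext hse, ?_⟩
      have hwb : H.t e ≠ g.fV (1 : Fin 2) := (dang0 g happ e hne).2
      rcases hte with hlw | hpw
      · by_cases hw0 : H.t e = g.fV (0 : Fin 2)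
        · refine Or.inr ?_
          rw [hpC]
          show (if H.t e = g.fV (0 : Fin 2) then some true else H.p (H.t e)) = some true
          rw [if_pos hw0]
        · refine Or.inl ?_
          rw [hlC]
          show (if H.t e = g.fV (0 : Fin 2) then some NodeLab.square else H.l (H.t e)) =
            some NodeLab.tri
          rw [if_neg hw0]
          exact hlw
      · exact absurd (huniq _ _ hpw hpb) hwb
  · -- connectivity
    intro v w
    obtain ⟨l, hwalk⟩ := hconn v.1 w.1
    have hs0 : H.s (g.fE ()) ≠ g.fV (1 : Fin 2) := by
      rw [hsrc]; exact hab
    obtain ⟨l', hwalk', hav⟩ := walk_avoid hs0 htgt (dang0 g happ) l.length l v.1 w.1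
      le_rfl v.2 w.2 hwalk
    clear hwalk
    -- lift the avoiding walk to the subgraph
    have hlift : ∀ (l : List (H.E × Bool)) (u z : H.V) (hu : u ≠ g.fV (1 : Fin 2))
        (hz : z ≠ g.fV (1 : Fin 2)), IsUndirWalk H u l z → (∀ p ∈ l, p.1 ≠ g.fE ()) →
        ∃ l'', IsUndirWalk (C0 g happ) ⟨u, hu⟩ l'' ⟨z, hz⟩ := by
      intro l
      induction l with
      | nil =>
        intro u z hu hz hwalk _
        exact ⟨[], Subtype.ext hwalk⟩
      | cons p rest ih =>
        intro u z hu hz hwalk hav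
        obtain ⟨e, bo⟩ := p
        have hne : e ≠ g.fE () := hav (e, bo) (List.mem_cons_self)
        have hav' : ∀ p ∈ rest, p.1 ≠ g.fE () := fun p hp => hav p (List.mem_cons_of_mem _ hp)
        cases bo
        · obtain ⟨h1, h2⟩ := hwalk
          have hsne : H.s e ≠ g.fV (1 : Fin 2) := (dang0 g happ e hne).1
          obtain ⟨l'', hw''⟩ := ih (H.s e) z hsne hz h2 hav'
          exact ⟨(⟨e, hne⟩, false) :: l'', ⟨Subtype.ext h1, hw''⟩⟩
        · obtain ⟨h1, h2⟩ := hwalk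
          have htne : H.t e ≠ g.fV (1 : Fin 2) := (dang0 g happ e hne).2
          obtain ⟨l'', hw''⟩ := ih (H.t e) z htne hz h2 hav'
          exact ⟨(⟨e, hne⟩, true) :: l'', ⟨Subtype.ext h1, hw''⟩⟩
    obtain ⟨l'', hw''⟩ := hlift l' v.1 w.1 v.2 w.2 hwalk' hav
    exact ⟨l'', hw''⟩
  · -- no cycles
    rintro ⟨v, l, hne, hw, hnd⟩
    apply hcyc
    refine ⟨v.1, l.map (fun p => (p.1.1, p.2)), by simpa using hne, ?_, ?_⟩
    · exact walk_map' Subtype.val Subtype.val (fun _ => rfl) (fun _ => rfl) l v v hw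
    · rw [List.map_map]
      have heq : (Prod.fst ∘ fun p : (C0 g happ).E × Bool => (p.1.1, p.2)) =
          Subtype.val ∘ Prod.fst := rfl
      erw [heq, ← List.map_map]
      exact hnd.map Subtype.val_injective
  · -- indegree
    intro v
    haveI := H.finE
    have hle : Nat.card {e : (C0 g happ).E // (C0 g happ).t e = v} ≤
        Nat.card {e : H.E // H.t e = v.1} := by
      apply Nat.card_le_card_of_injective
        (fun e => ⟨e.1.1, congrArg Subtype.val e.2⟩)
      intro x y hxy
      have h := congrArg Subtype.val hxy
      exact Subtype.ext (Subtype.ext h)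
    exact hle.trans (hdeg v.1)

lemma inv_result0 (g : Morphism r0.L H) (happ : r0.Applicable H g) (hinv : TPInv H) :
    TPInv (r0.result H g happ) := by
  obtain ⟨i⟩ := iso0 g happ
  exact inv_of_iso (Iso.flip i) (inv_C0 g happ hinv)

end TPr0inv

section TPr1all

attribute [local instance] Classical.propDecidable

variable {H : RGraph NodeLab Unit}

lemma inc1_ne_one : ∀ k : Unit, r1.incL.fV k ≠ (1 : Fin 2) :=
  fun _ h => (by decide : ¬ (0 : Fin 2) = 1) h

lemma dang1 (g : Morphism r1.L H) (happ : r1.Applicable H g) :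
    ∀ e : H.E, e ≠ g.fE () → H.s e ≠ g.fV (1 : Fin 2) ∧ H.t e ≠ g.fV (1 : Fin 2) := by
  intro e hne
  exact happ.2 e (fun e' h => hne h.symm) (1 : Fin 2) inc1_ne_one

lemma delV1 (g : Morphism r1.L H) : ∀ x : H.V, x ∈ r1.DelV H g ↔ x = g.fV (1 : Fin 2) := by
  intro x
  constructor
  · rintro ⟨v, hv, rfl⟩
    have hv0 : v ≠ (0 : Fin 2) := fun h => hv () h.symm
    rcases fin2_cases v with h | h
    · exact absurd h hv0
    · rw [h]
  · rintro rfl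
    exact ⟨(1 : Fin 2), inc1_ne_one, rfl⟩

lemma delE1 (g : Morphism r1.L H) : ∀ x : H.E, x ∈ r1.DelE H g ↔ x = g.fE () := by
  intro x
  constructor
  · rintro ⟨e, _, he⟩
    exact he ▸ rfl
  · rintro rfl
    exact ⟨(), fun k => k.elim, rfl⟩

/-- concrete description of the result of applying `r1`: delete the leaf and its
edge, relabel/re-root the parent -/
noncomputable def C1 (g : Morphism r1.L H) (happ : r1.Applicable H g) :
    RGraph NodeLab Unit where
  V := {x : H.V // x ≠ g.fV (1 : Fin 2)}
  E := {x : H.E // x ≠ g.fE ()}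
  finV := by haveI := H.finV; exact Subtype.finite
  finE := by haveI := H.finE; exact Subtype.finite
  s := fun e => ⟨H.s e.1, (dang1 g happ e.1 e.2).1⟩
  t := fun e => ⟨H.t e.1, (dang1 g happ e.1 e.2).2⟩
  m := fun e => H.m e.1
  l := fun v => if v.1 = g.fV (0 : Fin 2) then some NodeLab.square else H.l v.1
  p := fun v => if v.1 = g.fV (0 : Fin 2) then some true else H.p v.1

lemma iso1 (g : Morphism r1.L H) (happ : r1.Applicable H g) :
    Nonempty (Iso (r1.result H g happ) (C1 g happ)) := by
  refine ⟨⟨⟨Sum.elim (fun x => ⟨x.1, fun h => x.2 ((delV1 g x.1).mpr h)⟩)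
      (fun y => absurd rfl (y.2 y.1)),
    Sum.elim (fun x => ⟨x.1, fun h => x.2 ((delE1 g x.1).mpr h)⟩) (fun y => y.1.elim),
    ?_, ?_, ?_, ?_, ?_⟩,
    ⟨fun x => Sum.inl ⟨x.1, fun h => x.2 ((delV1 g x.1).mp h)⟩,
     fun x => Sum.inl ⟨x.1, fun h => x.2 ((delE1 g x.1).mp h)⟩, ?_, ?_, ?_, ?_, ?_⟩,
    ?_, ?_, ?_, ?_⟩⟩
  · rintro (x | y)
    · exact Subtype.ext rfl
    · exact y.1.elim
  · rintro (x | y)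
    · exact Subtype.ext rfl
    · exact y.1.elim
  · rintro (x | y)
    · exact Subsingleton.elim _ _
    · exact y.1.elim
  · -- toMor nodeLabel
    rintro (x | y)
    case inr => exact absurd rfl (y.2 y.1)
    intro c hc
    have hc' : (if hk : ∃ k : r1.K.V, r1.K.l k = none ∧ g.fV (r1.incL.fV k) = x.1
        then r1.R.l (r1.incR.fV hk.choose) else H.l x.1) = some c := hc
    show (if x.1 = g.fV (0 : Fin 2) then some NodeLab.square else H.l x.1) = some c
    by_cases h0 : x.1 = g.fV (0 : Fin 2)
    · rw [if_pos h0]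
      have hex : ∃ k : r1.K.V, r1.K.l k = none ∧ g.fV (r1.incL.fV k) = x.1 :=
        ⟨(), rfl, h0.symm⟩
      rw [dif_pos hex] at hc'
      exact hc'
    · rw [if_neg h0]
      have hnex : ¬ ∃ k : r1.K.V, r1.K.l k = none ∧ g.fV (r1.incL.fV k) = x.1 := by
        rintro ⟨k, -, hk⟩
        exact h0 ((hk : g.fV (0 : Fin 2) = x.1)).symm
      rw [dif_neg hnex] at hc'
      exact hc'
  · -- toMor rootedness
    rintro (x | y)
    case inr => exact absurd rfl (y.2 y.1)
    intro c hc
    have hc' : (if hk : ∃ k : r1.K.V, r1.K.p k = none ∧ g.fV (r1.incL.fV k) = x.1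
        then r1.R.p (r1.incR.fV hk.choose) else H.p x.1) = some c := hc
    show (if x.1 = g.fV (0 : Fin 2) then some true else H.p x.1) = some c
    by_cases h0 : x.1 = g.fV (0 : Fin 2)
    · rw [if_pos h0]
      have hex : ∃ k : r1.K.V, r1.K.p k = none ∧ g.fV (r1.incL.fV k) = x.1 :=
        ⟨(), rfl, h0.symm⟩
      rw [dif_pos hex] at hc'
      exact hc'
    · rw [if_neg h0]
      have hnex : ¬ ∃ k : r1.K.V, r1.K.p k = none ∧ g.fV (r1.incL.fV k) = x.1 := by
        rintro ⟨k, -, hk⟩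
        exact h0 ((hk : g.fV (0 : Fin 2) = x.1)).symm
      rw [dif_neg hnex] at hc'
      exact hc'
  · intro e
    exact congrArg Sum.inl (Subtype.ext rfl)
  · intro e
    exact congrArg Sum.inl (Subtype.ext rfl)
  · intro e
    exact Subsingleton.elim _ _
  · -- invMor nodeLabel
    intro v c hc
    have hc' : (if v.1 = g.fV (0 : Fin 2) then some NodeLab.square else H.l v.1)
        = some c := hc
    show (if hk : ∃ k : r1.K.V, r1.K.l k = none ∧ g.fV (r1.incL.fV k) = v.1
        then r1.R.l (r1.incR.fV hk.choose) else H.l v.1) = some c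
    by_cases h0 : v.1 = g.fV (0 : Fin 2)
    · rw [if_pos h0] at hc'
      have hex : ∃ k : r1.K.V, r1.K.l k = none ∧ g.fV (r1.incL.fV k) = v.1 :=
        ⟨(), rfl, h0.symm⟩
      rw [dif_pos hex]
      exact hc'
    · rw [if_neg h0] at hc'
      have hnex : ¬ ∃ k : r1.K.V, r1.K.l k = none ∧ g.fV (r1.incL.fV k) = v.1 := by
        rintro ⟨k, -, hk⟩
        exact h0 ((hk : g.fV (0 : Fin 2) = v.1)).symm
      rw [dif_neg hnex]
      exact hc'
  · -- invMor rootedness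
    intro v c hc
    have hc' : (if v.1 = g.fV (0 : Fin 2) then some true else H.p v.1) = some c := hc
    show (if hk : ∃ k : r1.K.V, r1.K.p k = none ∧ g.fV (r1.incL.fV k) = v.1
        then r1.R.p (r1.incR.fV hk.choose) else H.p v.1) = some c
    by_cases h0 : v.1 = g.fV (0 : Fin 2)
    · rw [if_pos h0] at hc'
      have hex : ∃ k : r1.K.V, r1.K.p k = none ∧ g.fV (r1.incL.fV k) = v.1 :=
        ⟨(), rfl, h0.symm⟩
      rw [dif_pos hex]
      exact hc'
    · rw [if_neg h0] at hc'
      have hnex : ¬ ∃ k : r1.K.V, r1.K.p k = none ∧ g.fV (r1.incL.fV k) = v.1 := by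
        rintro ⟨k, -, hk⟩
        exact h0 ((hk : g.fV (0 : Fin 2) = v.1)).symm
      rw [dif_neg hnex]
      exact hc'
  · rintro (x | y)
    · exact congrArg Sum.inl (Subtype.ext rfl)
    · exact absurd rfl (y.2 y.1)
  · rintro (x | y)
    · exact congrArg Sum.inl (Subtype.ext rfl)
    · exact y.1.elim
  · intro v
    exact Subtype.ext rfl
  · intro e
    exact Subtype.ext rfl

lemma inv_C1 (g : Morphism r1.L H) (happ : r1.Applicable H g) (hinv : TPInv H) :
    TPInv (C1 g happ) := by
  obtain ⟨⟨hl, hp⟩, ⟨rt, hrt⟩, huniq, hrootsq, htri, hconn, hcyc, hdeg⟩ := hinv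
  have hpa : H.p (g.fV (0 : Fin 2)) = some false := g.rootedness _ _ rfl
  have hpb : H.p (g.fV (1 : Fin 2)) = some true := g.rootedness _ _ rfl
  have hsrc : H.s (g.fE ()) = g.fV (0 : Fin 2) := (g.src ()).symm
  have htgt : H.t (g.fE ()) = g.fV (1 : Fin 2) := (g.tgt ()).symm
  have hab : g.fV (0 : Fin 2) ≠ g.fV (1 : Fin 2) := by
    intro h
    have h2 : (0 : Fin 2) = 1 := happ.1.1 h
    exact absurd h2 (by decide)
  have hlC : ∀ z : (C1 g happ).V, (C1 g happ).l z =
      (if z.1 = g.fV (0 : Fin 2) then some NodeLab.square else H.l z.1) := fun z => rfl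
  have hpC : ∀ z : (C1 g happ).V, (C1 g happ).p z =
      (if z.1 = g.fV (0 : Fin 2) then some true else H.p z.1) := fun z => rfl
  have hkey : ∀ z : (C1 g happ).V, (C1 g happ).p z = some true →
      z.1 = g.fV (0 : Fin 2) := by
    intro z hz
    rw [hpC] at hz
    split_ifs at hz with h0
    · exact h0
    · exact absurd (huniq z.1 _ hz hpb) z.2
  refine ⟨⟨?_, ?_⟩, ⟨⟨g.fV (0 : Fin 2), hab⟩, ?_⟩, ?_, ?_, ?_, ?_, ?_, ?_⟩
  · intro v
    rw [hlC]
    split_ifs with h0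
    · rfl
    · exact hl v.1
  · intro v
    rw [hpC]
    split_ifs with h0
    · rfl
    · exact hp v.1
  · erw [hpC]
    rw [if_pos rfl]
  · intro x y hx hy
    exact Subtype.ext ((hkey x hx).trans (hkey y hy).symm)
  · intro v hv
    rw [hlC, if_pos (hkey v hv)]
  · -- tri condition
    intro v hv
    rw [hlC] at hv
    split_ifs at hv with h0
    · simp at hv
    · obtain ⟨e, hse, hte⟩ := htri v.1 hv
      have hne : e ≠ g.fE () := by
        intro h
        rw [h, hsrc] at hse
        exact h0 hse.symm
      refine ⟨⟨e, hne⟩, Subtype.ext hse, ?_⟩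
      have hwb : H.t e ≠ g.fV (1 : Fin 2) := (dang1 g happ e hne).2
      rcases hte with hlw | hpw
      · by_cases hw0 : H.t e = g.fV (0 : Fin 2)
        · refine Or.inr ?_
          rw [hpC]
          show (if H.t e = g.fV (0 : Fin 2) then some true else H.p (H.t e)) = some true
          rw [if_pos hw0]
        · refine Or.inl ?_
          rw [hlC]
          show (if H.t e = g.fV (0 : Fin 2) then some NodeLab.square else H.l (H.t e)) =
            some NodeLab.tri
          rw [if_neg hw0]
          exact hlw
      · exact absurd (huniq _ _ hpw hpb) hwb
  · -- connectivity
    intro v w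
    obtain ⟨l, hwalk⟩ := hconn v.1 w.1
    have hs0 : H.s (g.fE ()) ≠ g.fV (1 : Fin 2) := by
      rw [hsrc]; exact hab
    obtain ⟨l', hwalk', hav⟩ := walk_avoid hs0 htgt (dang1 g happ) l.length l v.1 w.1
      le_rfl v.2 w.2 hwalk
    clear hwalk
    -- lift the avoiding walk to the subgraph
    have hlift : ∀ (l : List (H.E × Bool)) (u z : H.V) (hu : u ≠ g.fV (1 : Fin 2))
        (hz : z ≠ g.fV (1 : Fin 2)), IsUndirWalk H u l z → (∀ p ∈ l, p.1 ≠ g.fE ()) →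
        ∃ l'', IsUndirWalk (C1 g happ) ⟨u, hu⟩ l'' ⟨z, hz⟩ := by
      intro l
      induction l with
      | nil =>
        intro u z hu hz hwalk _
        exact ⟨[], Subtype.ext hwalk⟩
      | cons p rest ih =>
        intro u z hu hz hwalk hav
        obtain ⟨e, bo⟩ := p
        have hne : e ≠ g.fE () := hav (e, bo) (List.mem_cons_self)
        have hav' : ∀ p ∈ rest, p.1 ≠ g.fE () := fun p hp => hav p (List.mem_cons_of_mem _ hp)
        cases bo
        · obtain ⟨h1, h2⟩ := hwalk
          have hsne : H.s e ≠ g.fV (1 : Fin 2) := (dang1 g happ e hne).1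
          obtain ⟨l'', hw''⟩ := ih (H.s e) z hsne hz h2 hav'
          exact ⟨(⟨e, hne⟩, false) :: l'', ⟨Subtype.ext h1, hw''⟩⟩
        · obtain ⟨h1, h2⟩ := hwalk
          have htne : H.t e ≠ g.fV (1 : Fin 2) := (dang1 g happ e hne).2
          obtain ⟨l'', hw''⟩ := ih (H.t e) z htne hz h2 hav'
          exact ⟨(⟨e, hne⟩, true) :: l'', ⟨Subtype.ext h1, hw''⟩⟩
    obtain ⟨l'', hw''⟩ := hlift l' v.1 w.1 v.2 w.2 hwalk' hav
    exact ⟨l'', hw''⟩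
  · -- no cycles
    rintro ⟨v, l, hne, hw, hnd⟩
    apply hcyc
    refine ⟨v.1, l.map (fun p => (p.1.1, p.2)), by simpa using hne, ?_, ?_⟩
    · exact walk_map' Subtype.val Subtype.val (fun _ => rfl) (fun _ => rfl) l v v hw
    · rw [List.map_map]
      have heq : (Prod.fst ∘ fun p : (C1 g happ).E × Bool => (p.1.1, p.2)) =
          Subtype.val ∘ Prod.fst := rfl
      erw [heq, ← List.map_map]
      exact hnd.map Subtype.val_injective
  · -- indegree
    intro v
    haveI := H.finE
    have hle : Nat.card {e : (C1 g happ).E // (C1 g happ).t e = v} ≤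
        Nat.card {e : H.E // H.t e = v.1} := by
      apply Nat.card_le_card_of_injective
        (fun e => ⟨e.1.1, congrArg Subtype.val e.2⟩)
      intro x y hxy
      have h := congrArg Subtype.val hxy
      exact Subtype.ext (Subtype.ext h)
    exact hle.trans (hdeg v.1)

lemma inv_result1 (g : Morphism r1.L H) (happ : r1.Applicable H g) (hinv : TPInv H) :
    TPInv (r1.result H g happ) := by
  obtain ⟨i⟩ := iso1 g happ
  exact inv_of_iso (Iso.flip i) (inv_C1 g happ hinv)

end TPr1all

lemma tp_step {A B : RGraph NodeLab Unit} (h : GTStep TreeRules A B) (hA : TPInv A) :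
    TPInv B := by
  obtain ⟨r, hr, g, happ, ⟨i⟩⟩ := h
  simp only [TreeRules, Set.mem_insert_iff, Set.mem_singleton_iff] at hr
  rcases hr with rfl | rfl | rfl
  · exact inv_of_iso i (inv_result0 g happ hA)
  · exact inv_of_iso i (inv_result1 g happ hA)
  · exact inv_of_iso i (inv_result2 g happ hA)

/-- **Tree Progress**: if `G` is an input tree and `G ⇒*_𝓡 H`, then either `H`
has a single node, or `H` is not in normal form (some rule of `𝓡` is
applicable to `H` via a match satisfying the dangling condition). -/
theorem tree_progress (G H : RGraph NodeLab Unit)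
    (hG : IsInputGraph G) (hGtree : IsTree G)
    (hd : GTDerivStar TreeRules G H) :
    Nat.card H.V = 1 ∨
      ∃ r ∈ TreeRules, ∃ g : Morphism r.L H, r.Applicable H g := by
  have hInvG : TPInv G := tp_init hG hGtree
  rcases hd with hsteps | hiso
  · have hInvH : TPInv H := by
      induction hsteps with
      | refl => exact hInvG
      | tail _ hstep ih => exact tp_step hstep ih
    exact tp_progress hInvH
  · obtain ⟨i⟩ := hiso
    exact tp_progress (inv_of_iso i hInvG)
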